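/- arXiv:2505.02360 — 4 statements merged into one kernel-verified Lean document; each statement's English description precedes it below -/
import Mathlib

section
/- Let ℓ : ℝ^d → ℝ be differentiable with ∇ℓ(x₀) ≠ 0 and suppose the gradient map is L-Lipschitz: ‖∇ℓ(x) − ∇ℓ(y)‖₂ ≤ L‖x − y‖₂ for all x, y. Let ε > 0 and define F(δ) = ε · ∇ℓ(x₀ + δ)/‖∇ℓ(x₀ + δ)‖₂ wherever ∇ℓ(x₀ + δ) ≠ 0. Then for every δ with ∇ℓ(x₀ + δ) ≠ 0, ‖F(δ) − F(0)‖₂ ≤ (2 ε L / ‖∇ℓ(x₀)‖₂) · ‖δ‖₂. -/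
/-- If `ℓ` is differentiable with `L`-Lipschitz gradient and
`∇ℓ(x₀) ≠ 0`, then the normalized-gradient map
`F(δ) = ε • ∇ℓ(x₀ + δ)/‖∇ℓ(x₀ + δ)‖₂` satisfies, for every `δ` with
`∇ℓ(x₀ + δ) ≠ 0`, the Lipschitz-type bound
`‖F(δ) − F(0)‖₂ ≤ (2εL/‖∇ℓ(x₀)‖₂)·‖δ‖₂`. -/
theorem l2_fixed_point_map_lipschitz {d : ℕ}
    (ℓ : EuclideanSpace ℝ (Fin d) → ℝ) (hdiff : Differentiable ℝ ℓ)
    (L : ℝ) (hL : 0 ≤ L)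
    (hLip : ∀ x y : EuclideanSpace ℝ (Fin d),
      ‖gradient ℓ x - gradient ℓ y‖ ≤ L * ‖x - y‖)
    (x₀ : EuclideanSpace ℝ (Fin d)) (hg0 : gradient ℓ x₀ ≠ 0)
    (ε : ℝ) (hε : 0 < ε)
    (F : EuclideanSpace ℝ (Fin d) → EuclideanSpace ℝ (Fin d))
    (hF : ∀ δ, F δ = (ε / ‖gradient ℓ (x₀ + δ)‖) • gradient ℓ (x₀ + δ)) :
    ∀ δ : EuclideanSpace ℝ (Fin d), gradient ℓ (x₀ + δ) ≠ 0 →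
      ‖F δ - F 0‖ ≤ (2 * ε * L / ‖gradient ℓ x₀‖) * ‖δ‖ := by
  intro δ hg
  set g := gradient ℓ (x₀ + δ) with hgdef
  set g0 := gradient ℓ x₀ with hg0def
  have hF0 : F 0 = (ε / ‖g0‖) • g0 := by
    have := hF 0
    simpa [hg0def] using this
  have hFδ : F δ = (ε / ‖g‖) • g := hF δ
  have ha : (0:ℝ) < ‖g‖ := norm_pos_iff.2 hg
  have hb : (0:ℝ) < ‖g0‖ := norm_pos_iff.2 hg0
  have hgg0 : ‖g - g0‖ ≤ L * ‖δ‖ := by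
    have := hLip (x₀ + δ) x₀
    simpa [hgdef, hg0def] using this
  have key : F δ - F 0 = (ε / ‖g0‖) • (g - g0) + (ε / ‖g‖ - ε / ‖g0‖) • g := by
    rw [hFδ, hF0, smul_sub, sub_smul]
    abel
  have habs : |‖g0‖ - ‖g‖| ≤ ‖g - g0‖ := by
    have := abs_norm_sub_norm_le g0 g
    simpa [norm_sub_rev] using this
  have hterm2 : |ε / ‖g‖ - ε / ‖g0‖| * ‖g‖ = ε * |‖g0‖ - ‖g‖| / ‖g0‖ := by
    have h1 : ε / ‖g‖ - ε / ‖g0‖ = ε * (‖g0‖ - ‖g‖) / (‖g‖ * ‖g0‖) := by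
      field_simp
    rw [h1, abs_div, abs_mul, abs_of_pos hε, abs_of_pos (mul_pos ha hb)]
    field_simp
  rw [key]
  calc ‖(ε / ‖g0‖) • (g - g0) + (ε / ‖g‖ - ε / ‖g0‖) • g‖
      ≤ ‖(ε / ‖g0‖) • (g - g0)‖ + ‖(ε / ‖g‖ - ε / ‖g0‖) • g‖ := norm_add_le _ _
    _ = (ε / ‖g0‖) * ‖g - g0‖ + |ε / ‖g‖ - ε / ‖g0‖| * ‖g‖ := by
        rw [norm_smul, norm_smul, Real.norm_eq_abs, Real.norm_eq_abs,
          abs_of_pos (div_pos hε hb)]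
    _ ≤ (ε / ‖g0‖) * (L * ‖δ‖) + ε * ‖g - g0‖ / ‖g0‖ := by
        gcongr
        rw [hterm2]
        gcongr
    _ ≤ (ε / ‖g0‖) * (L * ‖δ‖) + ε * (L * ‖δ‖) / ‖g0‖ := by gcongr
    _ = (2 * ε * L / ‖g0‖) * ‖δ‖ := by field_simp; ring
end

section
/- Let q ∈ (1,2), ε > 0, m > 0, and let g : ℝ^d → ℝ^d satisfy: (i) ‖g(x₀+δ) − g(x₀)‖_q ≤ L‖δ‖_q for all δ; (ii) g(x₀) ≠ 0; (iii) for the given perturbation δ, every component of the normalized vectors f(δ) := g(x₀+δ)/‖g(x₀+δ)‖_q and f(0) := g(x₀)/‖g(x₀)‖_q has absolute value at least m/‖g(x₀)‖_q and, componentwise, |f(δ)_i| ≥ m' and |f(0)_i| ≥ m' for some m' > 0. Define F_p(δ) componentwise by F_p(δ)_i = ε · sign(g(x₀+δ)_i) · |f(δ)_i|^{q−1}. Then ‖F_p(δ) − F_p(0)‖_q ≤ ε · ((2−q)·(m')^{q−3} + (m')^{q−2}) · (2L/‖g(x₀)‖_q) · ‖δ‖_q. -/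
/-- The `ℓ^q` norm `(∑ i, |x i| ^ q) ^ (1/q)` on `Fin d → ℝ` for a real exponent `q`. -/
noncomputable def lpNorm {d : ℕ} (q : ℝ) (x : Fin d → ℝ) : ℝ :=
  (∑ i, |x i| ^ q) ^ (1 / q)

lemma lpNorm_nonneg' {d : ℕ} (q : ℝ) (x : Fin d → ℝ) : 0 ≤ lpNorm q x :=
  Real.rpow_nonneg (Finset.sum_nonneg fun _ _ => Real.rpow_nonneg (abs_nonneg _) q) _

lemma lpNorm_mono {d : ℕ} {q : ℝ} (hq : 0 < q) {x y : Fin d → ℝ}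
    (h : ∀ i, |x i| ≤ |y i|) : lpNorm q x ≤ lpNorm q y := by
  apply Real.rpow_le_rpow (Finset.sum_nonneg fun i _ => Real.rpow_nonneg (abs_nonneg _) q)
    (Finset.sum_le_sum fun i _ => Real.rpow_le_rpow (abs_nonneg _) (h i) hq.le)
    (by positivity)

lemma lpNorm_smul {d : ℕ} {q : ℝ} (hq : 0 < q) (c : ℝ) (x : Fin d → ℝ) :
    lpNorm q (c • x) = |c| * lpNorm q x := by
  unfold lpNorm
  have h1 : ∀ i, |(c • x) i| ^ q = |c| ^ q * |x i| ^ q := by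
    intro i
    simp [abs_mul, Real.mul_rpow (abs_nonneg _) (abs_nonneg _)]
  simp only [h1, ← Finset.mul_sum]
  rw [Real.mul_rpow (by positivity) (Finset.sum_nonneg fun i _ => Real.rpow_nonneg (abs_nonneg _) q),
    ← Real.rpow_mul (abs_nonneg c), mul_one_div_cancel hq.ne', Real.rpow_one]

lemma lpNorm_triangle {d : ℕ} {q : ℝ} (hq : 1 ≤ q) (x y : Fin d → ℝ) :
    lpNorm q (x + y) ≤ lpNorm q x + lpNorm q y := by
  have := Real.Lp_add_le Finset.univ x y hq
  unfold lpNorm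
  simpa using this

lemma lpNorm_neg {d : ℕ} {q : ℝ} (x : Fin d → ℝ) : lpNorm q (-x) = lpNorm q x := by
  unfold lpNorm; simp

lemma abs_le_lpNorm {d : ℕ} {q : ℝ} (hq : 0 < q) (x : Fin d → ℝ) (i : Fin d) :
    |x i| ≤ lpNorm q x := by
  have : |x i| = (|x i| ^ q) ^ (1/q) := by
    rw [← Real.rpow_mul (abs_nonneg _), mul_one_div_cancel hq.ne', Real.rpow_one]
  rw [this]
  exact Real.rpow_le_rpow (Real.rpow_nonneg (abs_nonneg _) _)
    (Finset.single_le_sum (fun j _ => Real.rpow_nonneg (abs_nonneg _) q) (Finset.mem_univ i))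
    (by positivity)

lemma lpNorm_pos {d : ℕ} {q : ℝ} (hq : 0 < q) {x : Fin d → ℝ} (hx : x ≠ 0) :
    0 < lpNorm q x := by
  obtain ⟨i, hi⟩ := Function.ne_iff.mp hx
  have : (0:ℝ) < |x i| := abs_pos.mpr hi
  exact lt_of_lt_of_le this (abs_le_lpNorm hq x i)

/-- Lipschitz bound for `t ↦ t^r` (negative exponent `r`) on `[m', ∞)`. -/
lemma rpow_lip {r m' : ℝ} (hr : r < 0) (hm' : 0 < m') {a b : ℝ} (ha : m' ≤ a) (hb : m' ≤ b) :
    |a ^ r - b ^ r| ≤ (-r) * m' ^ (r - 1) * |a - b| := by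
  have hderiv : ∀ x ∈ Set.Ici m', HasDerivWithinAt (fun t : ℝ => t ^ r)
      (r * x ^ (r - 1)) (Set.Ici m') x := by
    intro x hx
    exact (Real.hasDerivAt_rpow_const (Or.inl (by
      have : (0:ℝ) < x := lt_of_lt_of_le hm' hx; exact this.ne'))).hasDerivWithinAt
  have hbound : ∀ x ∈ Set.Ici m', ‖r * x ^ (r - 1)‖ ≤ (-r) * m' ^ (r - 1) := by
    intro x hx
    have hx0 : (0:ℝ) < x := lt_of_lt_of_le hm' hx
    rw [Real.norm_eq_abs, abs_mul, abs_of_neg hr, abs_of_nonneg (Real.rpow_nonneg hx0.le _)]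
    exact mul_le_mul_of_nonneg_left
      (Real.rpow_le_rpow_of_nonpos hm' hx (by linarith)) (by linarith)
  have := (convex_Ici m').norm_image_sub_le_of_norm_hasDerivWithin_le hderiv hbound hb ha
  simpa [Real.norm_eq_abs] using this

/-- Lipschitz bound for `t ↦ sign t * |t|^(q-1)` on `{m' ≤ |t|}` (with `|t| ≤ 1` on one arg). -/
lemma phi_lip {q m' : ℝ} (hq1 : 1 < q) (hq2 : q < 2) (hm' : 0 < m') {s t : ℝ}
    (hs : m' ≤ |s|) (ht : m' ≤ |t|) (ht1 : |t| ≤ 1) :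
    |Real.sign s * |s| ^ (q - 1) - Real.sign t * |t| ^ (q - 1)| ≤
      ((2 - q) * m' ^ (q - 3) + m' ^ (q - 2)) * |s - t| := by
  have hs0 : (0:ℝ) < |s| := lt_of_lt_of_le hm' hs
  have ht0 : (0:ℝ) < |t| := lt_of_lt_of_le hm' ht
  have key : ∀ u : ℝ, 0 < |u| → Real.sign u * |u| ^ (q - 1) = u * |u| ^ (q - 2) := by
    intro u hu
    have h1 : |u| ^ (q - 1) = |u| * |u| ^ (q - 2) := by
      rw [show q - 1 = 1 + (q - 2) by ring, Real.rpow_add hu 1 (q - 2), Real.rpow_one]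
    have h2 : Real.sign u * |u| = u := by
      rcases lt_trichotomy u 0 with h | h | h
      · rw [Real.sign_of_neg h, abs_of_neg h]; ring
      · exact absurd (h ▸ hu) (by simp)
      · rw [Real.sign_of_pos h, abs_of_pos h]; ring
    rw [h1, ← mul_assoc, h2]
  rw [key s hs0, key t ht0]
  have expand : s * |s| ^ (q - 2) - t * |t| ^ (q - 2)
      = (s - t) * |s| ^ (q - 2) + t * (|s| ^ (q - 2) - |t| ^ (q - 2)) := by ring
  rw [expand]
  have h1 : |(s - t) * |s| ^ (q - 2)| ≤ m' ^ (q - 2) * |s - t| := by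
    rw [abs_mul, abs_of_nonneg (Real.rpow_nonneg hs0.le _), mul_comm]
    exact mul_le_mul_of_nonneg_right
      (Real.rpow_le_rpow_of_nonpos hm' hs (by linarith)) (abs_nonneg _)
  have h2 : |t * (|s| ^ (q - 2) - |t| ^ (q - 2))| ≤ (2 - q) * m' ^ (q - 3) * |s - t| := by
    rw [abs_mul]
    have hlip := rpow_lip (r := q - 2) (by linarith) hm' hs ht
    have habs : |(|s| - |t|)| ≤ |s - t| := abs_abs_sub_abs_le_abs_sub s t
    calc |t| * |(|s| ^ (q - 2) - |t| ^ (q - 2))|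
        ≤ 1 * ((-(q - 2)) * m' ^ ((q - 2) - 1) * |(|s| - |t|)|) :=
          mul_le_mul ht1 hlip (abs_nonneg _) one_pos.le
      _ ≤ (2 - q) * m' ^ (q - 3) * |s - t| := by
          rw [one_mul]
          have : -(q-2) = 2 - q := by ring
          rw [this]
          have : (q - 2) - 1 = q - 3 := by ring
          rw [this]
          refine mul_le_mul_of_nonneg_left habs ?_
          have h2q : (0:ℝ) < 2 - q := by linarith
          positivity
  calc |(s - t) * |s| ^ (q - 2) + t * (|s| ^ (q - 2) - |t| ^ (q - 2))|
      ≤ |(s - t) * |s| ^ (q - 2)| + |t * (|s| ^ (q - 2) - |t| ^ (q - 2))| := abs_add_le _ _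
    _ ≤ m' ^ (q - 2) * |s - t| + (2 - q) * m' ^ (q - 3) * |s - t| := add_le_add h1 h2
    _ = ((2 - q) * m' ^ (q - 3) + m' ^ (q - 2)) * |s - t| := by ring

lemma sign_smul_pos' {c x : ℝ} (hc : 0 < c) : Real.sign (c * x) = Real.sign x := by
  rcases lt_trichotomy x 0 with h | h | h
  · rw [Real.sign_of_neg h, Real.sign_of_neg (mul_neg_of_pos_of_neg hc h)]
  · simp [h]
  · rw [Real.sign_of_pos h, Real.sign_of_pos (mul_pos hc h)]

/-- Local Lipschitz bound for the single-step `ℓ^p` attack map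
`F_p(δ)_i = ε · sign(g(x₀+δ)_i) · |f(δ)_i|^(q−1)`, where
`f(δ) = g(x₀+δ)/‖g(x₀+δ)‖_q`, under (i) an `ℓ^q`-Lipschitz bound on `g`,
(ii) `g(x₀) ≠ 0`, and (iii) componentwise lower bounds `m/‖g(x₀)‖_q` and `m' > 0`
on the magnitudes of the components of `f(δ)` and `f(0)`:
`‖F_p(δ) − F_p(0)‖_q ≤ ε·((2−q)(m')^(q−3) + (m')^(q−2))·(2L/‖g(x₀)‖_q)·‖δ‖_q`. -/
theorem lp_fixed_point_map_lipschitz {d : ℕ} (q ε m m' L : ℝ)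
    (hq1 : 1 < q) (hq2 : q < 2) (hε : 0 < ε) (hm : 0 < m) (hm' : 0 < m') (hL : 0 ≤ L)
    (g : (Fin d → ℝ) → (Fin d → ℝ)) (x₀ δ : Fin d → ℝ)
    (hLip : ∀ δ' : Fin d → ℝ, lpNorm q (g (x₀ + δ') - g x₀) ≤ L * lpNorm q δ')
    (hg0 : g x₀ ≠ 0)
    (f : (Fin d → ℝ) → (Fin d → ℝ))
    (hf : ∀ δ', f δ' = (lpNorm q (g (x₀ + δ')))⁻¹ • g (x₀ + δ'))
    (hcomp_m : ∀ i, m / lpNorm q (g x₀) ≤ |f δ i| ∧ m / lpNorm q (g x₀) ≤ |f 0 i|)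
    (hcomp_m' : ∀ i, m' ≤ |f δ i| ∧ m' ≤ |f 0 i|)
    (Fp : (Fin d → ℝ) → (Fin d → ℝ))
    (hFp : ∀ δ' i, Fp δ' i = ε * Real.sign (g (x₀ + δ') i) * |f δ' i| ^ (q - 1)) :
    lpNorm q (Fp δ - Fp 0) ≤
      ε * ((2 - q) * m' ^ (q - 3) + m' ^ (q - 2)) * (2 * L / lpNorm q (g x₀)) *
        lpNorm q δ := by
  have hq0 : (0:ℝ) < q := by linarith
  set u := g (x₀ + δ) with hu
  set v := g x₀ with hv
  -- d ≠ 0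
  have hne : Nonempty (Fin d) := by
    rcases Nat.eq_zero_or_pos d with h | h
    · subst h; exact absurd (funext fun i => i.elim0) hg0
    · exact ⟨⟨0, h⟩⟩
  obtain ⟨i₀⟩ := hne
  have hnv : 0 < lpNorm q v := lpNorm_pos hq0 hg0
  have hfδ : f δ = (lpNorm q u)⁻¹ • u := hf δ
  have hf0 : f 0 = (lpNorm q v)⁻¹ • v := by
    have := hf 0
    rwa [add_zero, ← hv] at this
  have hu_ne : u ≠ 0 := by
    intro h
    have h1 := (hcomp_m' i₀).1
    rw [hfδ, h] at h1
    simp at h1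
    linarith
  have hnu : 0 < lpNorm q u := lpNorm_pos hq0 hu_ne
  -- components of f 0 are at most 1
  have hf0norm : lpNorm q (f 0) = 1 := by
    rw [hf0, lpNorm_smul hq0, abs_of_pos (inv_pos.mpr hnv), inv_mul_cancel₀ hnv.ne']
  have hft1 : ∀ i, |f 0 i| ≤ 1 := fun i => hf0norm ▸ abs_le_lpNorm hq0 (f 0) i
  -- signs
  have hsignδ : ∀ i, Real.sign (u i) = Real.sign (f δ i) := by
    intro i
    rw [hfδ, Pi.smul_apply, smul_eq_mul, sign_smul_pos' (inv_pos.mpr hnu)]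
  have hsign0 : ∀ i, Real.sign (v i) = Real.sign (f 0 i) := by
    intro i
    rw [hf0, Pi.smul_apply, smul_eq_mul, sign_smul_pos' (inv_pos.mpr hnv)]
  set C := (2 - q) * m' ^ (q - 3) + m' ^ (q - 2) with hC
  have hCpos : 0 < C := by
    have h2q : (0:ℝ) < 2 - q := by linarith
    positivity
  -- componentwise bound
  have hcomp : ∀ i, |(Fp δ - Fp 0) i| ≤ |((ε * C) • (f δ - f 0)) i| := by
    intro i
    have hFp0 : Fp 0 i = ε * Real.sign (v i) * |f 0 i| ^ (q - 1) := by
      have := hFp 0 i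
      rwa [add_zero, ← hv] at this
    rw [Pi.sub_apply, hFp δ i, hFp0, ← hu]
    have heq : ε * Real.sign (u i) * |f δ i| ^ (q - 1)
          - ε * Real.sign (v i) * |f 0 i| ^ (q - 1)
        = ε * (Real.sign (f δ i) * |f δ i| ^ (q - 1)
          - Real.sign (f 0 i) * |f 0 i| ^ (q - 1)) := by
      rw [hsignδ i, hsign0 i]; ring
    rw [heq, abs_mul, abs_of_pos hε, Pi.smul_apply, Pi.sub_apply, smul_eq_mul, abs_mul,
      abs_of_pos (mul_pos hε hCpos), mul_assoc]
    exact mul_le_mul_of_nonneg_left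
      (phi_lip hq1 hq2 hm' (hcomp_m' i).1 (hcomp_m' i).2 (hft1 i)) hε.le
  have step1 : lpNorm q (Fp δ - Fp 0) ≤ ε * C * lpNorm q (f δ - f 0) := by
    calc lpNorm q (Fp δ - Fp 0) ≤ lpNorm q ((ε * C) • (f δ - f 0)) := lpNorm_mono hq0 hcomp
      _ = ε * C * lpNorm q (f δ - f 0) := by
          rw [lpNorm_smul hq0, abs_of_pos (mul_pos hε hCpos)]
  -- Lipschitz bound on the normalized field
  have hdiff : lpNorm q (u - v) ≤ L * lpNorm q δ := hLip δ
  have hvu : lpNorm q (v - u) = lpNorm q (u - v) := by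
    rw [← lpNorm_neg (v - u)]; congr 1; abel
  have hrev : |lpNorm q v - lpNorm q u| ≤ lpNorm q (u - v) := by
    rw [abs_sub_le_iff]
    constructor
    · have h := lpNorm_triangle hq1.le u (v - u)
      rw [show u + (v - u) = v by abel, hvu] at h
      linarith
    · have h := lpNorm_triangle hq1.le v (u - v)
      rw [show v + (u - v) = u by abel] at h
      linarith
  have decomp : f δ - f 0
      = ((lpNorm q u)⁻¹ - (lpNorm q v)⁻¹) • u + (lpNorm q v)⁻¹ • (u - v) := by
    rw [hfδ, hf0]
    funext i
    simp only [Pi.sub_apply, Pi.add_apply, Pi.smul_apply, smul_eq_mul]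
    ring
  have key1 : |(lpNorm q u)⁻¹ - (lpNorm q v)⁻¹| * lpNorm q u
      = |lpNorm q v - lpNorm q u| / lpNorm q v := by
    rw [show (lpNorm q u)⁻¹ - (lpNorm q v)⁻¹
        = (lpNorm q v - lpNorm q u) / (lpNorm q u * lpNorm q v) by
      field_simp]
    rw [abs_div, abs_of_pos (mul_pos hnu hnv)]
    field_simp
  have step2 : lpNorm q (f δ - f 0) ≤ 2 * L * lpNorm q δ / lpNorm q v := by
    rw [decomp]
    calc lpNorm q (((lpNorm q u)⁻¹ - (lpNorm q v)⁻¹) • u + (lpNorm q v)⁻¹ • (u - v))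
        ≤ lpNorm q (((lpNorm q u)⁻¹ - (lpNorm q v)⁻¹) • u)
          + lpNorm q ((lpNorm q v)⁻¹ • (u - v)) := lpNorm_triangle hq1.le _ _
      _ = |lpNorm q v - lpNorm q u| / lpNorm q v + (lpNorm q v)⁻¹ * lpNorm q (u - v) := by
          rw [lpNorm_smul hq0, lpNorm_smul hq0, key1, abs_of_pos (inv_pos.mpr hnv)]
      _ ≤ (L * lpNorm q δ) / lpNorm q v + (lpNorm q v)⁻¹ * (L * lpNorm q δ) := by
          gcongr
          exact le_trans hrev hdiff
      _ = 2 * L * lpNorm q δ / lpNorm q v := by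
          field_simp
          ring
  calc lpNorm q (Fp δ - Fp 0) ≤ ε * C * lpNorm q (f δ - f 0) := step1
    _ ≤ ε * C * (2 * L * lpNorm q δ / lpNorm q v) := by
        have := mul_le_mul_of_nonneg_left step2 (le_of_lt (mul_pos hε hCpos))
        exact this
    _ = ε * C * (2 * L / lpNorm q v) * lpNorm q δ := by ring
end

section
/- Let g ∈ ℝ^d be nonzero, let p ≥ 3 be real, and let q = p/(p−1) ∈ (1, 3/2]. Then (Σ_i |g_i|^q) / ( ‖g‖₂ · (Σ_i |g_i|^{2(q−1)})^{1/2} ) ≥ ‖g‖₁ / ( √d · ‖g‖₂ ), i.e. the cosine similarity between the ℓ² and ℓ^p single-step attack directions is at least the cosine similarity between the ℓ² and ℓ^∞ (sign) attack directions. -/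
/-- Monotonicity of Angular Separation: for nonzero `g ∈ ℝ^d`,
real `p ≥ 3` and `q = p/(p−1)`, the cosine similarity between the `ℓ²` and `ℓ^p`
single-step attack directions,
`cos(θ_{2,p}) = (∑ |g_i|^q) / (‖g‖₂ · (∑ |g_i|^(2(q−1)))^(1/2))`,
is at least the cosine similarity between the `ℓ²` and `ℓ^∞` (sign) directions,
`cos(θ_{2,∞}) = ‖g‖₁/(√d · ‖g‖₂)`. -/
theorem angular_separation_monotone {d : ℕ} (g : Fin d → ℝ) (hg : g ≠ 0)
    (p q : ℝ) (hp : 3 ≤ p) (hq : q = p / (p - 1)) :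
    (∑ i, |g i|) / (Real.sqrt (d : ℝ) * Real.sqrt (∑ i, g i ^ 2)) ≤
      (∑ i, |g i| ^ q) /
        (Real.sqrt (∑ i, g i ^ 2) * Real.sqrt (∑ i, |g i| ^ (2 * (q - 1)))) := by
  set a : Fin d → ℝ := fun i => |g i| with ha
  have ha0 : ∀ i, 0 ≤ a i := fun i => abs_nonneg _
  have hp1 : (0:ℝ) < p - 1 := by linarith
  set r : ℝ := q - 1 with hr
  have hrval : r = 1 / (p - 1) := by
    rw [hr, hq]
    field_simp
    ring
  have hr0 : 0 < r := by rw [hrval]; positivity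
  have hr2 : r ≤ 1 / 2 := by
    rw [hrval]
    rw [div_le_div_iff₀ hp1 (by norm_num)]
    linarith
  have hq1r : q = 1 + r := by ring
  -- nonzero index
  obtain ⟨i₀, hi₀⟩ : ∃ i, g i ≠ 0 := by
    by_contra h
    push_neg at h
    exact hg (funext h)
  have hd : 0 < d := Fin.pos i₀
  -- positivity of sums
  have hS2 : 0 < ∑ i, g i ^ 2 := by
    apply Finset.sum_pos' (fun i _ => sq_nonneg _)
    exact ⟨i₀, Finset.mem_univ _, by positivity⟩
  have hS1 : 0 < ∑ i, a i := by
    apply Finset.sum_pos' (fun i _ => ha0 i)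
    exact ⟨i₀, Finset.mem_univ _, abs_pos.mpr hi₀⟩
  have hSq : 0 < ∑ i, a i ^ q := by
    apply Finset.sum_pos' (fun i _ => Real.rpow_nonneg (ha0 i) _)
    refine ⟨i₀, Finset.mem_univ _, Real.rpow_pos_of_pos (abs_pos.mpr hi₀) _⟩
  have hS2r : 0 < ∑ i, a i ^ (2 * r) := by
    apply Finset.sum_pos' (fun i _ => Real.rpow_nonneg (ha0 i) _)
    refine ⟨i₀, Finset.mem_univ _, Real.rpow_pos_of_pos (abs_pos.mpr hi₀) _⟩
  -- Cauchy-Schwarz: (∑ a)^2 ≤ (∑ a^(1+r)) * (∑ a^(1-r))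
  have cauchy : (∑ i, a i) ^ 2 ≤ (∑ i, a i ^ (1 + r)) * ∑ i, a i ^ (1 - r) := by
    have key := Finset.sum_mul_sq_le_sq_mul_sq Finset.univ
      (fun i => a i ^ ((1 + r) / 2)) (fun i => a i ^ ((1 - r) / 2))
    have hsum : (1 + r)/2 + (1 - r)/2 = 1 := by ring
    have e1 : ∀ i : Fin d, a i ^ ((1 + r)/2) * a i ^ ((1 - r)/2) = a i := by
      intro i
      rw [← Real.rpow_add' (ha0 i) (by rw [hsum]; norm_num), hsum, Real.rpow_one]
    have e2 : ∀ i : Fin d, (a i ^ ((1 + r)/2)) ^ 2 = a i ^ (1 + r) := by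
      intro i
      rw [← Real.rpow_natCast (a i ^ ((1 + r)/2)) 2, ← Real.rpow_mul (ha0 i)]
      norm_num
    have e3 : ∀ i : Fin d, (a i ^ ((1 - r)/2)) ^ 2 = a i ^ (1 - r) := by
      intro i
      rw [← Real.rpow_natCast (a i ^ ((1 - r)/2)) 2, ← Real.rpow_mul (ha0 i)]
      norm_num
    simp only [e1, e2, e3] at key
    exact key
  -- Chebyshev: (∑ a^(1-r)) * (∑ a^(2r)) ≤ d * ∑ a^(1+r)
  have cheby : (∑ i, a i ^ (1 - r)) * (∑ i, a i ^ (2 * r)) ≤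
      (d : ℝ) * ∑ i, a i ^ (1 + r) := by
    have hmono : Monovary (fun i => a i ^ (1 - r)) (fun i => a i ^ (2 * r)) := by
      intro i j hij
      dsimp only at hij ⊢
      have hab : a i < a j :=
        (Real.rpow_lt_rpow_iff (ha0 i) (ha0 j) (by positivity : (0:ℝ) < 2 * r)).mp hij
      exact Real.rpow_le_rpow (ha0 i) hab.le (by linarith)
    have key := hmono.sum_mul_sum_le_card_mul_sum
    simp only [Finset.card_univ, Fintype.card_fin] at key
    calc (∑ i, a i ^ (1 - r)) * (∑ i, a i ^ (2 * r))
        ≤ (d : ℝ) * ∑ i, a i ^ (1 - r) * a i ^ (2 * r) := key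
      _ = (d : ℝ) * ∑ i, a i ^ (1 + r) := by
          congr 1
          apply Finset.sum_congr rfl
          intro i _
          rw [← Real.rpow_add' (ha0 i) (by norm_num; linarith)]
          ring_nf
  -- combine: (∑ a)^2 * ∑ a^(2r) ≤ d * (∑ a^(1+r))^2
  have main : (∑ i, a i) ^ 2 * (∑ i, a i ^ (2 * r)) ≤
      (d : ℝ) * (∑ i, a i ^ (1 + r)) ^ 2 := by
    calc (∑ i, a i) ^ 2 * (∑ i, a i ^ (2 * r))
        ≤ ((∑ i, a i ^ (1 + r)) * ∑ i, a i ^ (1 - r)) * (∑ i, a i ^ (2 * r)) := by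
          apply mul_le_mul_of_nonneg_right cauchy hS2r.le
      _ = (∑ i, a i ^ (1 + r)) * ((∑ i, a i ^ (1 - r)) * (∑ i, a i ^ (2 * r))) := by ring
      _ ≤ (∑ i, a i ^ (1 + r)) * ((d : ℝ) * ∑ i, a i ^ (1 + r)) := by
          apply mul_le_mul_of_nonneg_left cheby
          positivity
      _ = (d : ℝ) * (∑ i, a i ^ (1 + r)) ^ 2 := by ring
  -- derive sqrt inequality: (∑ a) * √(∑ a^(2r)) ≤ √d * ∑ a^(1+r)
  have hsqrt : (∑ i, a i) * Real.sqrt (∑ i, a i ^ (2 * r)) ≤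
      Real.sqrt d * ∑ i, a i ^ (1 + r) := by
    have h1 : (0:ℝ) ≤ (∑ i, a i) * Real.sqrt (∑ i, a i ^ (2 * r)) := by positivity
    have h2 : (0:ℝ) ≤ Real.sqrt d * ∑ i, a i ^ (1 + r) := by positivity
    have main' : ((∑ i, a i) * Real.sqrt (∑ i, a i ^ (2 * r))) ^ 2 ≤
        (Real.sqrt d * ∑ i, a i ^ (1 + r)) ^ 2 := by
      calc ((∑ i, a i) * Real.sqrt (∑ i, a i ^ (2 * r))) ^ 2
          = (∑ i, a i) ^ 2 * (∑ i, a i ^ (2 * r)) := by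
            rw [mul_pow, Real.sq_sqrt hS2r.le]
        _ ≤ (d : ℝ) * (∑ i, a i ^ (1 + r)) ^ 2 := main
        _ = (Real.sqrt d * ∑ i, a i ^ (1 + r)) ^ 2 := by
            rw [mul_pow, Real.sq_sqrt (by positivity : (0:ℝ) ≤ (d:ℝ))]
    have := Real.sqrt_le_sqrt main'
    rwa [Real.sqrt_sq h1, Real.sqrt_sq h2] at this
  -- finish
  have hN2 : 0 < Real.sqrt (∑ i, g i ^ 2) := Real.sqrt_pos.mpr hS2
  have hdpos : (0:ℝ) < Real.sqrt d := Real.sqrt_pos.mpr (by exact_mod_cast hd)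
  have hS2rs : 0 < Real.sqrt (∑ i, a i ^ (2 * r)) := Real.sqrt_pos.mpr hS2r
  rw [div_le_div_iff₀ (by positivity) (by positivity)]
  have : (∑ i, |g i| ^ q) = ∑ i, a i ^ (1 + r) := by
    apply Finset.sum_congr rfl
    intro i _
    rw [hq1r]
  rw [this]
  calc (∑ i, |g i|) * (Real.sqrt (∑ i, g i ^ 2) * Real.sqrt (∑ i, |g i| ^ (2 * (q-1))))
      = ((∑ i, a i) * Real.sqrt (∑ i, a i ^ (2 * r))) * Real.sqrt (∑ i, g i ^ 2) := by
        rw [hr]; ring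
    _ ≤ (Real.sqrt d * ∑ i, a i ^ (1 + r)) * Real.sqrt (∑ i, g i ^ 2) := by
        apply mul_le_mul_of_nonneg_right hsqrt hN2.le
    _ = (∑ i, a i ^ (1 + r)) * (Real.sqrt d * Real.sqrt (∑ i, g i ^ 2)) := by ring
end

section
/- Let g ∈ ℝ^d be a vector all of whose components are nonzero, and define φ : (1, 2) → ℝ by φ(q) = (Σ_i |g_i|^q) / ( ‖g‖₂ · (Σ_i |g_i|^{2(q−1)})^{1/2} ), extended to q = 1 by φ(1) = ‖g‖₁/(√d · ‖g‖₂). Let ρ_i = |g_i|/‖g‖₁, H = −Σ_i ρ_i log ρ_i, and H_m = −(1/d) Σ_i log ρ_i. Then φ is differentiable at q = 1 with derivative φ'(1) = (‖g‖₁/(√d · ‖g‖₂)) · (H_m − H); equivalently, φ(q) = √(PR₁(g)/d) · (1 + (q−1)(H_m − H)) + O((q−1)²) as q → 1⁺, where PR₁(g) = (‖g‖₁/‖g‖₂)². -/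
/-- for `g ∈ ℝ^d` with all components nonzero, the cosine similarity
`φ(q) = (∑ |g_i|^q) / (‖g‖₂ · (∑ |g_i|^(2(q−1)))^(1/2))` between the `ℓ²` and `ℓ^p`
attack directions (with `q = p/(p−1)`), whose value at `q = 1` is `‖g‖₁/(√d·‖g‖₂)`,
is differentiable at `q = 1` with derivative
`φ'(1) = (‖g‖₁/(√d·‖g‖₂))·(H_m − H) = √(PR₁(g)/d)·(H_m − H)`,
where `ρ_i = |g_i|/‖g‖₁`, `H = −∑ ρ_i log ρ_i` and `H_m = −(1/d)∑ log ρ_i`. -/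
theorem cos_similarity_taylor_entropy_gap {d : ℕ} (g : Fin d → ℝ)
    (hg : ∀ i, g i ≠ 0)
    (φ : ℝ → ℝ)
    (hφ : ∀ q : ℝ, φ q = (∑ i, |g i| ^ q) /
        (Real.sqrt (∑ i, g i ^ 2) * Real.sqrt (∑ i, |g i| ^ (2 * (q - 1)))))
    (ρ : Fin d → ℝ) (hρ : ∀ i, ρ i = |g i| / ∑ j, |g j|)
    (H Hm : ℝ)
    (hH : H = -∑ i, ρ i * Real.log (ρ i))
    (hHm : Hm = -(1 / (d : ℝ)) * ∑ i, Real.log (ρ i)) :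
    HasDerivAt φ
      (((∑ i, |g i|) / (Real.sqrt (d : ℝ) * Real.sqrt (∑ i, g i ^ 2))) * (Hm - H))
      1 := by
  have hfun : φ = fun q => (∑ i, |g i| ^ q) /
      (Real.sqrt (∑ i, g i ^ 2) * Real.sqrt (∑ i, |g i| ^ (2 * (q - 1)))) := funext hφ
  subst hfun
  rcases Nat.eq_zero_or_pos d with hd | hd
  · subst hd
    simp only [Finset.univ_eq_empty, Finset.sum_empty, zero_div, Nat.cast_zero,
      Real.sqrt_zero, zero_mul]
    exact hasDerivAt_const 1 0
  have habs : ∀ i : Fin d, (0:ℝ) < |g i| := fun i => abs_pos.2 (hg i)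
  have hS1 : (0:ℝ) < ∑ i, |g i| :=
    Finset.sum_pos (fun i _ => habs i) ⟨⟨0, hd⟩, Finset.mem_univ _⟩
  have hS2 : (0:ℝ) < ∑ i, g i ^ 2 :=
    Finset.sum_pos (fun i _ => by have := hg i; positivity) ⟨⟨0, hd⟩, Finset.mem_univ _⟩
  set L := Real.sqrt (∑ i, g i ^ 2) with hLdef
  have hL : 0 < L := Real.sqrt_pos.2 hS2
  have hdpos : (0:ℝ) < (d:ℝ) := Nat.cast_pos.2 hd
  have hs : (0:ℝ) < Real.sqrt d := Real.sqrt_pos.2 hdpos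
  -- numerator
  have hN : HasDerivAt (fun q : ℝ => ∑ i, |g i| ^ q)
      (∑ i, |g i| * Real.log |g i|) 1 := by
    refine HasDerivAt.fun_sum fun i _ => ?_
    simpa [Real.rpow_one] using
      (Real.hasStrictDerivAt_const_rpow (habs i) 1).hasDerivAt
  -- inner sum of denominator
  have hD : HasDerivAt (fun q : ℝ => ∑ i, |g i| ^ (2 * (q - 1)))
      (∑ i, 2 * Real.log |g i|) 1 := by
    refine HasDerivAt.fun_sum fun i _ => ?_
    have hinner : HasDerivAt (fun q : ℝ => 2 * (q - 1)) 2 1 := by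
      simpa using ((hasDerivAt_id (1:ℝ)).sub_const 1).const_mul 2
    have := ((Real.hasStrictDerivAt_const_rpow (habs i)
        (2 * ((1:ℝ) - 1))).hasDerivAt).comp 1 hinner
    simpa [Real.rpow_zero, mul_comm, Function.comp_def] using this
  have hD1 : (∑ i, |g i| ^ (2 * ((1:ℝ) - 1))) = (d:ℝ) := by
    simp [Real.rpow_zero]
  have hsqrtD : HasDerivAt (fun q : ℝ => Real.sqrt (∑ i, |g i| ^ (2 * (q - 1))))
      ((1 / (2 * Real.sqrt d)) * ∑ i, 2 * Real.log |g i|) 1 := by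
    have := (Real.hasDerivAt_sqrt (x := ∑ i, |g i| ^ (2 * ((1:ℝ) - 1)))
      (by rw [hD1]; exact ne_of_gt hdpos)).comp 1 hD
    simpa [hD1, Function.comp_def] using this
  have hden : HasDerivAt (fun q : ℝ => L * Real.sqrt (∑ i, |g i| ^ (2 * (q - 1))))
      (L * ((1 / (2 * Real.sqrt d)) * ∑ i, 2 * Real.log |g i|)) 1 :=
    hsqrtD.const_mul L
  have hden1 : L * Real.sqrt (∑ i, |g i| ^ (2 * ((1:ℝ) - 1))) = L * Real.sqrt d := by
    rw [hD1]
  have hdenne : L * Real.sqrt (∑ i, |g i| ^ (2 * ((1:ℝ) - 1))) ≠ 0 := by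
    rw [hden1]; positivity
  have hdiv := hN.div hden hdenne
  convert hdiv using 1
  · rfl
  · rfl
  · rfl
  -- algebra
  rw [hden1]
  have hN1 : (∑ i, |g i| ^ (1:ℝ)) = ∑ i, |g i| := by simp [Real.rpow_one]
  rw [hN1]
  have hlogρ : ∀ i, Real.log (ρ i) = Real.log |g i| - Real.log (∑ j, |g j|) := by
    intro i
    rw [hρ i, Real.log_div (ne_of_gt (habs i)) (ne_of_gt hS1)]
  have hHval : H = -(1 / (∑ j, |g j|)) * (∑ i, |g i| * Real.log |g i|)
      + Real.log (∑ j, |g j|) := by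
    rw [hH]
    have : ∀ i : Fin d, ρ i * Real.log (ρ i)
        = (1 / (∑ j, |g j|)) * (|g i| * Real.log |g i|)
          - (|g i| / (∑ j, |g j|)) * Real.log (∑ j, |g j|) := by
      intro i; rw [hlogρ i, hρ i]; ring
    have h2 : ∑ x, (|g x| / (∑ j, |g j|)) * Real.log (∑ j, |g j|)
        = Real.log (∑ j, |g j|) := by
      rw [← Finset.sum_mul, ← Finset.sum_div]
      field_simp
    rw [Finset.sum_congr rfl fun i _ => this i, Finset.sum_sub_distrib,
      ← Finset.mul_sum, h2]
    ring
  have hHmval : Hm = -(1 / (d:ℝ)) * (∑ i, Real.log |g i|) + Real.log (∑ j, |g j|) := by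
    rw [hHm, Finset.sum_congr rfl fun i _ => hlogρ i, Finset.sum_sub_distrib]
    simp [Finset.sum_const]
    field_simp
    ring
  rw [hHval, hHmval]
  set A := ∑ i, |g i| * Real.log |g i| with hA
  set B := ∑ i, Real.log |g i| with hB
  set S := ∑ i, |g i| with hS
  have hB2 : (∑ i, 2 * Real.log |g i|) = 2 * B := by
    rw [hB, Finset.mul_sum]
  rw [hB2]
  have hs2 : Real.sqrt d * Real.sqrt d = (d:ℝ) := Real.mul_self_sqrt hdpos.le
  field_simp
  linear_combination (-(S * B)) * hs2
end
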